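/- (3rd order operator CCM) Let H₀, U, K₃, K₁ be elements of an associative algebra with U invertible, satisfying [K₃, H₀] = 0, [K₃, U] + [K₁, H₀] = 0, and [K₁, U] = 0. Assume additionally U commutes with itself and let b be a central scalar. Then K̃ = K₃ − K₁ U⁻¹(H₀ + b) satisfies [K̃, U⁻¹(H₀ + b)] = 0. -/
import Mathlib


/-- 3rd order operator CCM: given [K₃,H₀] = 0, [K₃,U] + [K₁,H₀] = 0, [K₁,U] = 0 with U
invertible and b a central scalar, K̃ = K₃ − K₁ U⁻¹(H₀+b) commutes with U⁻¹(H₀+b). -/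
theorem stmt13 {R : Type*} [Ring R] [Algebra ℝ R] (H₀ U K₃ K₁ Uinv : R) (b : ℝ)
    (hU : U * Uinv = 1) (hU' : Uinv * U = 1)
    (h1 : K₃ * H₀ - H₀ * K₃ = 0)
    (h2 : (K₃ * U - U * K₃) + (K₁ * H₀ - H₀ * K₁) = 0)
    (h3 : K₁ * U - U * K₁ = 0) :
    (K₃ - K₁ * (Uinv * (H₀ + algebraMap ℝ R b))) * (Uinv * (H₀ + algebraMap ℝ R b))
      - (Uinv * (H₀ + algebraMap ℝ R b)) * (K₃ - K₁ * (Uinv * (H₀ + algebraMap ℝ R b))) = 0 := by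
  set c : R := algebraMap ℝ R b with hc
  set A : R := Uinv * (H₀ + c) with hA
  set D : R := K₁ * H₀ - H₀ * K₁ with hD
  have hK3H : K₃ * H₀ = H₀ * K₃ := sub_eq_zero.mp h1
  have hK3c : K₃ * c = c * K₃ := (Algebra.commutes b K₃).symm
  have hK1c : K₁ * c = c * K₁ := (Algebra.commutes b K₁).symm
  have hK1U : K₁ * U = U * K₁ := sub_eq_zero.mp h3
  have hK1Uinv : K₁ * Uinv = Uinv * K₁ := by
    calc K₁ * Uinv = Uinv * U * K₁ * Uinv := by rw [hU']; noncomm_ring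
    _ = Uinv * (K₁ * U) * Uinv := by rw [hK1U]; noncomm_ring
    _ = Uinv * K₁ * (U * Uinv) := by noncomm_ring
    _ = Uinv * K₁ := by rw [hU]; noncomm_ring
  have hUK3 : U * K₃ = K₃ * U + D := by
    have h : K₃ * U + D - U * K₃ = 0 := by
      rw [show K₃ * U + D - U * K₃ = (K₃ * U - U * K₃) + D by abel]; exact h2
    exact (sub_eq_zero.mp h).symm
  have hK3Uinv : K₃ * Uinv = Uinv * K₃ + Uinv * D * Uinv := by
    calc K₃ * Uinv = Uinv * (U * K₃) * Uinv := by
          rw [show Uinv * (U * K₃) * Uinv = (Uinv * U) * (K₃ * Uinv) by noncomm_ring, hU',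
            one_mul]
    _ = Uinv * (K₃ * U + D) * Uinv := by rw [hUK3]
    _ = Uinv * K₃ * (U * Uinv) + Uinv * D * Uinv := by noncomm_ring
    _ = Uinv * K₃ + Uinv * D * Uinv := by rw [hU, mul_one]
  have hK3Hc : K₃ * (H₀ + c) = (H₀ + c) * K₃ := by
    rw [mul_add, add_mul, hK3H, hK3c]
  have h_a : K₃ * A - A * K₃ = Uinv * D * A := by
    calc K₃ * A - A * K₃ = (K₃ * Uinv) * (H₀ + c) - A * K₃ := by rw [hA]; noncomm_ring
    _ = Uinv * (K₃ * (H₀ + c)) + Uinv * D * A - A * K₃ := by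
          rw [hK3Uinv, hA]; noncomm_ring
    _ = Uinv * ((H₀ + c) * K₃) + Uinv * D * A - A * K₃ := by rw [hK3Hc]
    _ = Uinv * D * A := by rw [hA]; noncomm_ring
  have hHcK1 : (H₀ + c) * K₁ = K₁ * (H₀ + c) - D := by
    rw [hD, mul_add, add_mul, hK1c]; noncomm_ring
  have hAK1 : A * K₁ = K₁ * A - Uinv * D := by
    calc A * K₁ = Uinv * ((H₀ + c) * K₁) := by rw [hA]; noncomm_ring
    _ = Uinv * (K₁ * (H₀ + c)) - Uinv * D := by rw [hHcK1]; noncomm_ring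
    _ = (K₁ * Uinv) * (H₀ + c) - Uinv * D := by
          rw [hK1Uinv]; noncomm_ring
    _ = K₁ * A - Uinv * D := by rw [hA]; noncomm_ring
  have h_b : K₁ * A * A - A * (K₁ * A) = Uinv * D * A := by
    calc K₁ * A * A - A * (K₁ * A) = K₁ * A * A - (A * K₁) * A := by noncomm_ring
    _ = K₁ * A * A - (K₁ * A - Uinv * D) * A := by rw [hAK1]
    _ = Uinv * D * A := by noncomm_ring
  calc (K₃ - K₁ * A) * A - A * (K₃ - K₁ * A)
      = (K₃ * A - A * K₃) - (K₁ * A * A - A * (K₁ * A)) := by noncomm_ring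
    _ = Uinv * D * A - Uinv * D * A := by rw [h_a, h_b]
    _ = 0 := by noncomm_ring
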